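/- The m-ary reflected Gray code for n-tuples is a list of length m^n containing every n-tuple over {0,...,m-1} exactly once. -/

import Mathlib

/-- The `m`-ary reflected Gray code on `n`-tuples over `{0, …, m-1}`, with the
least significant digit `a₁` last in the list.  For `n = 0` it is the single
empty tuple; each codeword `Cᵢ` of the code for length `n` (1-indexed `i`) is
extended by the digits `0, …, m-1` in increasing order if `i` is odd and in
decreasing order if `i` is even. -/
def mGray (m : ℕ) : ℕ → List (List ℕ)
  | 0 => [[]]
  | n + 1 =>
      ((mGray m n).zipIdx.map Prod.swap |>.map (fun p =>
        (if p.1 % 2 = 0 then List.range m else (List.range m).reverse).map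
          (fun d => p.2 ++ [d]))).flatten

lemma mem_mGray_succ (m n : ℕ) (l : List ℕ) :
    l ∈ mGray m (n+1) ↔ ∃ c ∈ mGray m n, ∃ d < m, l = c ++ [d] := by
  simp only [mGray, List.mem_flatten, List.mem_map]
  constructor
  · rintro ⟨L, ⟨p, ⟨q, hq, rfl⟩, rfl⟩, hl⟩
    rcases List.mem_map.1 hl with ⟨d, hd, rfl⟩
    refine ⟨q.1, List.fst_mem_of_mem_zipIdx hq, d, ?_, rfl⟩
    split at hd <;> simp_all
  · rintro ⟨c, hc, d, hd, rfl⟩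
    obtain ⟨i, hi, hci⟩ := List.getElem_of_mem hc
    refine ⟨_, ⟨(i, c), ⟨(c, i), ?_, rfl⟩, rfl⟩, ?_⟩
    · exact List.mem_zipIdx_iff_getElem?.2 (by rw [List.getElem?_eq_getElem hi, hci])
    · simp only [List.mem_map]
      exact ⟨d, by split <;> simp [hd], rfl⟩

/-- The `m`-ary reflected Gray code for `n`-tuples is a list of length `m^n`
containing every `n`-tuple over `{0, …, m-1}` exactly once. -/
theorem mGray_enumerates (m n : ℕ) :
    (mGray m n).length = m ^ n ∧ (mGray m n).Nodup ∧
      ∀ l : List ℕ, l ∈ mGray m n ↔ (l.length = n ∧ ∀ x ∈ l, x < m) := by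
  induction n with
  | zero => simp [mGray, List.length_eq_zero_iff]
  | succ n ih =>
    obtain ⟨hlen, hnd, hmem⟩ := ih
    refine ⟨?_, ?_, ?_⟩
    · rw [mGray, List.length_flatten, List.map_map]
      rw [List.sum_eq_card_nsmul _ m ?_, smul_eq_mul, List.length_map,
        List.length_map, List.length_zipIdx, hlen, pow_succ]
      intro a ha
      rcases List.mem_map.1 ha with ⟨p, hp, rfl⟩
      simp only [Function.comp, List.length_map]
      split <;> simp
    · rw [mGray]
      rw [List.nodup_flatten]
      constructor
      · intro L hL
        rcases List.mem_map.1 hL with ⟨p, hp, rfl⟩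
        apply List.Nodup.map
        · intro a b hab
          simpa using hab
        · split <;> simp [List.nodup_range]
      · rw [List.pairwise_map]
        have hpw : ((mGray m n).zipIdx.map Prod.swap).Pairwise (fun p q => p.2 ≠ q.2) := by
          have := (List.pairwise_map (f := Prod.snd)).1
            (by rw [List.map_map, show Prod.snd ∘ Prod.swap = (Prod.fst : List ℕ × ℕ → List ℕ) from rfl, List.zipIdx_map_fst 0]; exact hnd)
          exact this
        refine hpw.imp ?_
        rintro p q hne a ha hb
        rcases List.mem_map.1 ha with ⟨d, _, rfl⟩
        rcases List.mem_map.1 hb with ⟨d', _, heq⟩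
        exact hne ((List.append_inj' heq rfl).1.symm ▸ rfl)
    · intro l
      rw [mem_mGray_succ]
      constructor
      · rintro ⟨c, hc, d, hd, rfl⟩
        obtain ⟨hcl, hcm⟩ := (hmem c).1 hc
        refine ⟨by simp [hcl], ?_⟩
        intro x hx
        rcases List.mem_append.1 hx with h | h
        · exact hcm x h
        · rw [List.mem_singleton] at h; exact h ▸ hd
      · rintro ⟨hl, hm⟩
        rcases l.eq_nil_or_concat with rfl | ⟨c, d, rfl⟩
        · simp at hl
        · refine ⟨c, (hmem c).2 ⟨by simpa using hl, fun x hx => hm x (by simp [hx])⟩,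
            d, hm d (by simp), by simp⟩
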